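/- For any n×n real symmetric positive definite matrices X and Y, J_vN(X:Y) = 0 if and only if X = Y. -/

import Mathlib

open Matrix

section aux
variable {n : Type*} [Fintype n] [DecidableEq n]

lemma myCfc_id {A : Matrix n n ℝ} (hA : A.IsHermitian) : hA.cfc id = A := by
  rw [Matrix.IsHermitian.cfc]
  exact hA.spectral_theorem.symm

lemma trace_diag_conj (d e : n → ℝ) (P : Matrix n n ℝ) :
    (Matrix.diagonal d * P * Matrix.diagonal e * star P).trace
      = ∑ i, ∑ j, d i * e j * (P i j)^2 := by
  have h : ∀ i j, (Matrix.diagonal d * P * Matrix.diagonal e) i j = d i * P i j * e j := by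
    intro i j; rw [Matrix.mul_diagonal, Matrix.diagonal_mul]
  simp only [Matrix.trace, Matrix.diag_apply, Matrix.mul_apply, h, Matrix.star_apply, star_trivial]
  refine Finset.sum_congr rfl fun i _ => Finset.sum_congr rfl fun j _ => by ring

lemma trace_cfc_mul {A B : Matrix n n ℝ} (hA : A.IsHermitian) (hB : B.IsHermitian)
    (f g : ℝ → ℝ) :
    (hA.cfc f * hB.cfc g).trace
      = ∑ i, ∑ j, f (hA.eigenvalues i) * g (hB.eigenvalues j) *
          ((star (hA.eigenvectorUnitary : Matrix n n ℝ) * (hB.eigenvectorUnitary : Matrix n n ℝ)) i j)^2 := by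
  set U : Matrix n n ℝ := (hA.eigenvectorUnitary : Matrix n n ℝ) with hU
  set V : Matrix n n ℝ := (hB.eigenvectorUnitary : Matrix n n ℝ) with hV
  set Q : Matrix n n ℝ := star U * V with hQ
  set D1 : Matrix n n ℝ := Matrix.diagonal (RCLike.ofReal ∘ f ∘ hA.eigenvalues) with hD1
  set D2 : Matrix n n ℝ := Matrix.diagonal (RCLike.ofReal ∘ g ∘ hB.eigenvalues) with hD2
  have key : hA.cfc f * hB.cfc g = U * (D1 * Q * D2 * star V) := by
    rw [Matrix.IsHermitian.cfc, Matrix.IsHermitian.cfc]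
    simp only [Unitary.conjStarAlgAut_apply]
    simp only [← hU, ← hV, ← hD1, ← hD2, hQ, Matrix.mul_assoc]
  rw [key, Matrix.trace_mul_comm]
  have key2 : D1 * Q * D2 * star V * U = D1 * Q * D2 * star Q := by
    rw [hQ, StarMul.star_mul, star_star, Matrix.mul_assoc, Matrix.mul_assoc, Matrix.mul_assoc,
      Matrix.mul_assoc]
  rw [key2, hD1, hD2]
  have hof : (RCLike.ofReal : ℝ → ℝ) ∘ f ∘ hA.eigenvalues = f ∘ hA.eigenvalues := by
    ext x; simp
  have hof2 : (RCLike.ofReal : ℝ → ℝ) ∘ g ∘ hB.eigenvalues = g ∘ hB.eigenvalues := by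
    ext x; simp
  rw [hof, hof2, trace_diag_conj]
  rfl

lemma log_key_nonneg {a b : ℝ} (ha : 0 < a) (hb : 0 < b) :
    0 ≤ (a - b) * (Real.log a - Real.log b) := by
  rcases lt_trichotomy a b with h | h | h
  · have := Real.log_lt_log ha h
    nlinarith
  · simp [h]
  · have := Real.log_lt_log hb h
    nlinarith

lemma log_key_eq {a b : ℝ} (ha : 0 < a) (hb : 0 < b)
    (h : (a - b) * (Real.log a - Real.log b) = 0) : a = b := by
  rcases lt_trichotomy a b with h' | h' | h'
  · have := Real.log_lt_log ha h'
    nlinarith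
  · exact h'
  · have := Real.log_lt_log hb h'
    nlinarith

end aux

/-- Matrix logarithm of a real symmetric matrix, via the spectral decomposition:
apply the real logarithm to the eigenvalues. (Junk value `0` if not symmetric.) -/
noncomputable def matLog {n : Type*} [Fintype n] [DecidableEq n]
    (A : Matrix n n ℝ) : Matrix n n ℝ :=
  if h : A.IsHermitian then h.cfc Real.log else 0

/-- The von Neumann divergence `D_vN(X‖Y) = Tr(X log X − X log Y − X + Y)`. -/
noncomputable def DvN {n : Type*} [Fintype n] [DecidableEq n]
    (X Y : Matrix n n ℝ) : ℝ :=
  (X * matLog X - X * matLog Y - X + Y).trace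

/-- The symmetric (Jeffery) von Neumann divergence
`J_vN(X:Y) = (1/2)(D_vN(X‖Y) + D_vN(Y‖X))`. -/
noncomputable def JvN {n : Type*} [Fintype n] [DecidableEq n]
    (X Y : Matrix n n ℝ) : ℝ :=
  (1 / 2) * (DvN X Y + DvN Y X)

/-- `J_vN(X:Y) = 0` iff `X = Y`. -/
theorem JvN_eq_zero_iff {n : Type*} [Fintype n] [DecidableEq n]
    (X Y : Matrix n n ℝ) (hX : X.PosDef) (hY : Y.PosDef) :
    JvN X Y = 0 ↔ X = Y := by
  constructor
  · intro h0
    have hXh : X.IsHermitian := hX.1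
    have hYh : Y.IsHermitian := hY.1
    set U : Matrix n n ℝ := (hXh.eigenvectorUnitary : Matrix n n ℝ) with hUdef
    set V : Matrix n n ℝ := (hYh.eigenvectorUnitary : Matrix n n ℝ) with hVdef
    set Q : Matrix n n ℝ := star U * V with hQdef
    set lam : n → ℝ := hXh.eigenvalues with hlam
    set mu : n → ℝ := hYh.eigenvalues with hmu
    have hlampos : ∀ i, 0 < lam i := hX.eigenvalues_pos
    have hmupos : ∀ i, 0 < mu i := hY.eigenvalues_pos
    have hUU : U * star U = 1 := mem_unitaryGroup_iff.mp hXh.eigenvectorUnitary.2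
    have hUU' : star U * U = 1 := mem_unitaryGroup_iff'.mp hXh.eigenvectorUnitary.2
    have hVV : V * star V = 1 := mem_unitaryGroup_iff.mp hYh.eigenvectorUnitary.2
    have hVV' : star V * V = 1 := mem_unitaryGroup_iff'.mp hYh.eigenvectorUnitary.2
    have hLX : matLog X = hXh.cfc Real.log := dif_pos hXh
    have hLY : matLog Y = hYh.cfc Real.log := dif_pos hYh
    -- row and column sums of squares of Q
    have hQQ : Q * star Q = 1 := by
      rw [hQdef, StarMul.star_mul, star_star]
      calc star U * V * (star V * U) = star U * (V * star V) * U := by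
            simp only [Matrix.mul_assoc]
        _ = 1 := by rw [hVV, mul_one, hUU']
    have hQQ' : star Q * Q = 1 := by
      rw [hQdef, StarMul.star_mul, star_star]
      calc star V * U * (star U * V) = star V * (U * star U) * V := by
            simp only [Matrix.mul_assoc]
        _ = 1 := by rw [hUU, mul_one, hVV']
    have hrow : ∀ i, ∑ j, (Q i j)^2 = 1 := by
      intro i
      have := congrArg (fun M => M i i) hQQ
      simpa [Matrix.mul_apply, Matrix.one_apply, sq] using this
    have hcol : ∀ j, ∑ i, (Q i j)^2 = 1 := by
      intro j
      have := congrArg (fun M => M j j) hQQ'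
      simpa [Matrix.mul_apply, Matrix.one_apply, sq, mul_comm] using this
    -- the four trace identities
    have tXY : (X * matLog Y).trace = ∑ i, ∑ j, lam i * Real.log (mu j) * (Q i j)^2 := by
      conv_lhs => rw [← myCfc_id hXh, hLY]
      rw [trace_cfc_mul hXh hYh id Real.log]
      rfl
    have tYX : (Y * matLog X).trace = ∑ i, ∑ j, mu j * Real.log (lam i) * (Q i j)^2 := by
      conv_lhs => rw [← myCfc_id hYh, hLX]
      rw [trace_cfc_mul hYh hXh id Real.log]
      have hstar : (star V * U : Matrix n n ℝ) = star Q := by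
        rw [hQdef, StarMul.star_mul, star_star]
      rw [hstar, Finset.sum_comm]
      refine Finset.sum_congr rfl fun i _ => Finset.sum_congr rfl fun j _ => ?_
      simp [Matrix.star_apply, hlam, hmu]
    have tXX : (X * matLog X).trace = ∑ i, lam i * Real.log (lam i) := by
      have h1 : (X * matLog X).trace = (hXh.cfc id * hXh.cfc Real.log).trace := by
        rw [myCfc_id hXh, hLX]
      rw [h1, trace_cfc_mul hXh hXh id Real.log, ← hUdef, hUU']
      simp [Matrix.one_apply, apply_ite (· ^ (2:ℕ)), hlam]
    have tYY : (Y * matLog Y).trace = ∑ j, mu j * Real.log (mu j) := by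
      have h1 : (Y * matLog Y).trace = (hYh.cfc id * hYh.cfc Real.log).trace := by
        rw [myCfc_id hYh, hLY]
      rw [h1, trace_cfc_mul hYh hYh id Real.log, ← hVdef, hVV']
      simp [Matrix.one_apply, apply_ite (· ^ (2:ℕ)), hmu]
    -- the symmetrized divergence as a double sum
    have hbig : DvN X Y + DvN Y X
        = ∑ i, ∑ j, (lam i - mu j) * (Real.log (lam i) - Real.log (mu j)) * (Q i j)^2 := by
      rw [DvN, DvN]
      simp only [Matrix.trace_add, Matrix.trace_sub]
      rw [tXX, tYY, tXY, tYX]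
      have hgen : ∀ (s1 s2 s3 s4 tx ty : ℝ),
          s1 - s3 - tx + ty + (s2 - s4 - ty + tx) = s1 + s2 - (s3 + s4) := by intros; ring
      rw [hgen]
      have hA1 : ∑ i, lam i * Real.log (lam i)
          = ∑ i, ∑ j, lam i * Real.log (lam i) * (Q i j)^2 := by
        refine Finset.sum_congr rfl fun i _ => ?_
        rw [← Finset.mul_sum, hrow i, mul_one]
      have hA2 : ∑ j, mu j * Real.log (mu j)
          = ∑ i, ∑ j, mu j * Real.log (mu j) * (Q i j)^2 := by
        rw [Finset.sum_comm]
        refine Finset.sum_congr rfl fun j _ => ?_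
        rw [← Finset.mul_sum, hcol j, mul_one]
      rw [hA1, hA2, ← Finset.sum_add_distrib, ← Finset.sum_add_distrib,
        ← Finset.sum_sub_distrib]
      refine Finset.sum_congr rfl fun i _ => ?_
      rw [← Finset.sum_add_distrib, ← Finset.sum_add_distrib, ← Finset.sum_sub_distrib]
      exact Finset.sum_congr rfl fun j _ => by ring
    -- from JvN = 0, every term vanishes
    have hT : ∑ i, ∑ j, (lam i - mu j) * (Real.log (lam i) - Real.log (mu j)) * (Q i j)^2 = 0 := by
      rw [← hbig]
      have := h0
      rw [JvN] at this
      linarith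
    have hnn : ∀ i j, 0 ≤ (lam i - mu j) * (Real.log (lam i) - Real.log (mu j)) * (Q i j)^2 :=
      fun i j => mul_nonneg (log_key_nonneg (hlampos i) (hmupos j)) (sq_nonneg _)
    have hz : ∀ i j, (lam i - mu j) * (Real.log (lam i) - Real.log (mu j)) * (Q i j)^2 = 0 := by
      intro i j
      have h1 := (Finset.sum_eq_zero_iff_of_nonneg
        (fun i _ => Finset.sum_nonneg fun j _ => hnn i j)).mp hT i (Finset.mem_univ i)
      exact (Finset.sum_eq_zero_iff_of_nonneg (fun j _ => hnn i j)).mp h1 j (Finset.mem_univ j)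
    have heig : ∀ i j, Q i j ≠ 0 → lam i = mu j := by
      intro i j hq
      have h2 : (lam i - mu j) * (Real.log (lam i) - Real.log (mu j)) = 0 := by
        rcases mul_eq_zero.mp (hz i j) with h | h
        · exact h
        · exact absurd (sq_eq_zero_iff.mp h) hq
      exact log_key_eq (hlampos i) (hmupos j) h2
    -- reconstruct X = Y
    have hof : (RCLike.ofReal : ℝ → ℝ) ∘ lam = lam := by ext x; simp
    have hof2 : (RCLike.ofReal : ℝ → ℝ) ∘ mu = mu := by ext x; simp
    have e1 : X = U * Matrix.diagonal lam * star U := by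
      conv_lhs => rw [hXh.spectral_theorem]
      rw [show (RCLike.ofReal : ℝ → ℝ) ∘ hXh.eigenvalues = lam from hof]
      rw [Unitary.conjStarAlgAut_apply]
    have e2 : Y = V * Matrix.diagonal mu * star V := by
      conv_lhs => rw [hYh.spectral_theorem]
      rw [show (RCLike.ofReal : ℝ → ℝ) ∘ hYh.eigenvalues = mu from hof2]
      rw [Unitary.conjStarAlgAut_apply]
    have hcomm : Matrix.diagonal lam * Q = Q * Matrix.diagonal mu := by
      ext i j
      rw [Matrix.diagonal_mul, Matrix.mul_diagonal]
      by_cases hq : Q i j = 0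
      · simp [hq]
      · rw [heig i j hq, mul_comm]
    calc X = U * Matrix.diagonal lam * star U := e1
      _ = U * Matrix.diagonal lam * star U * (V * star V) := by rw [hVV, mul_one]
      _ = U * (Matrix.diagonal lam * Q) * star V := by
          rw [hQdef]; simp only [Matrix.mul_assoc]
      _ = U * (Q * Matrix.diagonal mu) * star V := by rw [hcomm]
      _ = U * star U * (V * Matrix.diagonal mu * star V) := by
          rw [hQdef]; simp only [Matrix.mul_assoc]
      _ = Y := by rw [hUU, one_mul, ← e2]
  · rintro rfl
    simp [JvN, DvN]
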